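/- Let n ≥ 1, let f : (0,1) → ℝ be positive, and let w : [0,1] → ℝ be three times continuously differentiable with (n−1)·x·w(x) + f(x)^n · w'''(x) = 0 for all x ∈ (0,1), w(1) = 0, w'(1) = 0, and w'(0) = 0. Then w ≡ 0 on [0,1]. -/

import Mathlib

/-- First derivative within `[0,1]`. -/
noncomputable def dI (f : ℝ → ℝ) : ℝ → ℝ := derivWithin f (Set.Icc 0 1)

/-- Third derivative within `[0,1]`. -/
noncomputable def d3I (f : ℝ → ℝ) : ℝ → ℝ := dI (dI (dI f))

/-- Uniqueness for the homogeneous linearized problem: if `n ≥ 1`, `f > 0` on `(0,1)`, and `w`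
is C³ on `[0,1]` with `(n−1)·x·w + fⁿ·w''' = 0` on `(0,1)`, `w(1) = 0`, `w'(1) = 0`,
`w'(0) = 0`, then `w ≡ 0` on `[0,1]`. -/
theorem homogeneous_linearized_unique (n : ℝ) (hn : 1 ≤ n)
    (f : ℝ → ℝ) (hf : ∀ x ∈ Set.Ioo (0:ℝ) 1, 0 < f x)
    (w : ℝ → ℝ) (hreg : ContDiffOn ℝ 3 w (Set.Icc 0 1))
    (heq : ∀ x ∈ Set.Ioo (0:ℝ) 1, (n - 1) * x * w x + f x ^ n * d3I w x = 0)
    (h1 : w 1 = 0) (h2 : dI w 1 = 0) (h3 : dI w 0 = 0) :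
    ∀ x ∈ Set.Icc (0:ℝ) 1, w x = 0 := by
  have hs : UniqueDiffOn ℝ (Set.Icc (0:ℝ) 1) := uniqueDiffOn_Icc one_pos
  simp only [d3I, dI] at heq h2 h3
  set w1 : ℝ → ℝ := derivWithin w (Set.Icc 0 1) with hw1def
  set w2 : ℝ → ℝ := derivWithin w1 (Set.Icc 0 1) with hw2def
  set w3 : ℝ → ℝ := derivWithin w2 (Set.Icc 0 1) with hw3def
  have hreg1 : ContDiffOn ℝ 2 w1 (Set.Icc 0 1) := hreg.derivWithin hs (by norm_num)
  have hreg2 : ContDiffOn ℝ 1 w2 (Set.Icc 0 1) := hreg1.derivWithin hs (by norm_num)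
  have hd0 : ∀ x ∈ Set.Icc (0:ℝ) 1, HasDerivWithinAt w (w1 x) (Set.Icc 0 1) x :=
    fun x hx => ((hreg.differentiableOn (by norm_num)) x hx).hasDerivWithinAt
  have hd1 : ∀ x ∈ Set.Icc (0:ℝ) 1, HasDerivWithinAt w1 (w2 x) (Set.Icc 0 1) x :=
    fun x hx => ((hreg1.differentiableOn (by norm_num)) x hx).hasDerivWithinAt
  have hd2 : ∀ x ∈ Set.Icc (0:ℝ) 1, HasDerivWithinAt w2 (w3 x) (Set.Icc 0 1) x :=
    fun x hx => ((hreg2.differentiableOn (by norm_num)) x hx).hasDerivWithinAt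
  have hD0 : ∀ x ∈ Set.Ioo (0:ℝ) 1, HasDerivAt w (w1 x) x := fun x hx =>
    (hd0 x (Set.Ioo_subset_Icc_self hx)).hasDerivAt (Icc_mem_nhds hx.1 hx.2)
  have hD1 : ∀ x ∈ Set.Ioo (0:ℝ) 1, HasDerivAt w1 (w2 x) x := fun x hx =>
    (hd1 x (Set.Ioo_subset_Icc_self hx)).hasDerivAt (Icc_mem_nhds hx.1 hx.2)
  have hD2 : ∀ x ∈ Set.Ioo (0:ℝ) 1, HasDerivAt w2 (w3 x) x := fun x hx =>
    (hd2 x (Set.Ioo_subset_Icc_self hx)).hasDerivAt (Icc_mem_nhds hx.1 hx.2)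
  -- key pointwise sign: w * w''' ≤ 0 on (0,1)
  have hkey : ∀ x ∈ Set.Ioo (0:ℝ) 1, w x * w3 x ≤ 0 := by
    intro x hx
    have hfpos : 0 < f x ^ n := Real.rpow_pos_of_pos (hf x hx) n
    have h5 : f x ^ n * (w x * w3 x) ≤ 0 := by
      have he := heq x hx
      have hnn : 0 ≤ (n - 1) * x * (w x * w x) :=
        mul_nonneg (mul_nonneg (by linarith) hx.1.le) (mul_self_nonneg _)
      have h6 : f x ^ n * (w x * w3 x) = -((n - 1) * x * (w x * w x)) := by
        linear_combination w x * he
      linarith [h6]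
    by_contra hc
    push_neg at hc
    exact absurd (mul_pos hfpos hc) (not_lt.2 h5)
  -- H = w w'' - (w')²/2 is nonincreasing, H 1 = 0, so H ≥ 0
  set H : ℝ → ℝ := fun x => w x * w2 x - w1 x * w1 x / 2 with hHdef
  have hHd : ∀ x ∈ Set.Ioo (0:ℝ) 1,
      HasDerivAt H (w1 x * w2 x + w x * w3 x - (w2 x * w1 x + w1 x * w2 x) / 2) x :=
    fun x hx => (((hD0 x hx).mul (hD2 x hx)).sub (((hD1 x hx).mul (hD1 x hx)).div_const 2))
  have hHcont : ContinuousOn H (Set.Icc (0:ℝ) 1) :=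
    ((hreg.continuousOn).mul (hreg2.continuousOn)).sub
      (((hreg1.continuousOn).mul (hreg1.continuousOn)).div_const 2)
  have hHanti : AntitoneOn H (Set.Icc (0:ℝ) 1) := by
    apply antitoneOn_of_deriv_nonpos (convex_Icc 0 1) hHcont
    · rw [interior_Icc]
      exact fun x hx => (hHd x hx).differentiableAt.differentiableWithinAt
    · rw [interior_Icc]
      intro x hx
      rw [(hHd x hx).deriv]
      have := hkey x hx
      linarith
  have hH1 : H 1 = 0 := by simp [hHdef, h1, h2]
  have hH0 : ∀ x ∈ Set.Icc (0:ℝ) 1, 0 ≤ H x := by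
    intro x hx
    have := hHanti hx (Set.right_mem_Icc.2 zero_le_one) hx.2
    linarith [hH1 ▸ this]
  -- ψ = (w²)' is nondecreasing, ψ 0 = 0, so ψ ≥ 0
  set ψ : ℝ → ℝ := fun x => w1 x * w x + w x * w1 x with hψdef
  have hψd : ∀ x ∈ Set.Ioo (0:ℝ) 1,
      HasDerivAt ψ ((w2 x * w x + w1 x * w1 x) + (w1 x * w1 x + w x * w2 x)) x :=
    fun x hx => ((hD1 x hx).mul (hD0 x hx)).add ((hD0 x hx).mul (hD1 x hx))
  have hψcont : ContinuousOn ψ (Set.Icc (0:ℝ) 1) :=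
    ((hreg1.continuousOn).mul (hreg.continuousOn)).add
      ((hreg.continuousOn).mul (hreg1.continuousOn))
  have hψmono : MonotoneOn ψ (Set.Icc (0:ℝ) 1) := by
    apply monotoneOn_of_deriv_nonneg (convex_Icc 0 1) hψcont
    · rw [interior_Icc]
      exact fun x hx => (hψd x hx).differentiableAt.differentiableWithinAt
    · rw [interior_Icc]
      intro x hx
      rw [(hψd x hx).deriv]
      have h0 := hH0 x (Set.Ioo_subset_Icc_self hx)
      have h1' := mul_self_nonneg (w1 x)
      simp only [hHdef] at h0
      linarith
  have hψ0 : ψ 0 = 0 := by simp [hψdef, h3]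
  have hψnn : ∀ x ∈ Set.Icc (0:ℝ) 1, 0 ≤ ψ x := by
    intro x hx
    have := hψmono (Set.left_mem_Icc.2 zero_le_one) hx hx.1
    linarith [hψ0 ▸ this]
  -- φ = w² is nondecreasing, so φ ≤ φ 1 = 0
  have hφd : ∀ x ∈ Set.Ioo (0:ℝ) 1, HasDerivAt (fun x => w x * w x) (ψ x) x :=
    fun x hx => (hD0 x hx).mul (hD0 x hx)
  have hφmono : MonotoneOn (fun x => w x * w x) (Set.Icc (0:ℝ) 1) := by
    apply monotoneOn_of_deriv_nonneg (convex_Icc 0 1)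
      ((hreg.continuousOn).mul (hreg.continuousOn))
    · rw [interior_Icc]
      exact fun x hx => (hφd x hx).differentiableAt.differentiableWithinAt
    · rw [interior_Icc]
      intro x hx
      rw [show deriv (w * w) x = ψ x from (hφd x hx).deriv]
      exact hψnn x (Set.Ioo_subset_Icc_self hx)
  intro x hx
  have hle : w x * w x ≤ w 1 * w 1 :=
    hφmono hx (Set.right_mem_Icc.2 zero_le_one) hx.2
  rw [h1] at hle
  have := mul_self_nonneg (w x)
  have : w x * w x = 0 := le_antisymm (by linarith [hle]) this
  exact mul_self_eq_zero.1 this
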